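/- Let α > 0, β ≠ 0, δ > 0 and define ω₁ = √2 · √((α + 1)β² + δ + √((α + 1)²β⁴ − 2(α − 1)β²δ + δ²)) / (2|β|√α) and ω₂ = √2 · √((α + 1)β² + δ − √((α + 1)²β⁴ − 2(α − 1)β²δ + δ²)) / (2|β|√α). Then ω₁² and ω₂² are exactly the two roots of p(σ) = σ² − ((α + 1)β² + δ)/(αβ²) σ + δ/(αβ²), and ω₁ > ω₂ > 0. -/

import Mathlib

/-- The explicit characteristic frequencies `ω₁, ω₂` satisfy `ω₁ > ω₂ > 0`,
and `ω₁²`, `ω₂²` are exactly the two roots of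
`p(σ) = σ² − ((α+1)β² + δ)/(αβ²) σ + δ/(αβ²)`. -/
theorem characteristic_frequencies (α β δ : ℝ) (hα : 0 < α) (hβ : β ≠ 0) (hδ : 0 < δ)
    (ω₁ ω₂ : ℝ)
    (hω₁ : ω₁ = Real.sqrt 2 * Real.sqrt ((α + 1) * β ^ 2 + δ
        + Real.sqrt ((α + 1) ^ 2 * β ^ 4 - 2 * (α - 1) * β ^ 2 * δ + δ ^ 2))
      / (2 * |β| * Real.sqrt α))
    (hω₂ : ω₂ = Real.sqrt 2 * Real.sqrt ((α + 1) * β ^ 2 + δ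
        - Real.sqrt ((α + 1) ^ 2 * β ^ 4 - 2 * (α - 1) * β ^ 2 * δ + δ ^ 2))
      / (2 * |β| * Real.sqrt α)) :
    (ω₁ ^ 2) ^ 2 - ((α + 1) * β ^ 2 + δ) / (α * β ^ 2) * ω₁ ^ 2 + δ / (α * β ^ 2) = 0 ∧
    (ω₂ ^ 2) ^ 2 - ((α + 1) * β ^ 2 + δ) / (α * β ^ 2) * ω₂ ^ 2 + δ / (α * β ^ 2) = 0 ∧
    (∀ σ : ℝ, σ ^ 2 - ((α + 1) * β ^ 2 + δ) / (α * β ^ 2) * σ + δ / (α * β ^ 2) = 0 →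
      σ = ω₁ ^ 2 ∨ σ = ω₂ ^ 2) ∧
    ω₂ < ω₁ ∧ 0 < ω₂ := by
  have hβ2 : (0:ℝ) < β ^ 2 := by positivity
  have hα' : α ≠ 0 := ne_of_gt hα
  have hβ2' : β ^ 2 ≠ 0 := ne_of_gt hβ2
  set S : ℝ := (α + 1) * β ^ 2 + δ with hS
  set D : ℝ := (α + 1) ^ 2 * β ^ 4 - 2 * (α - 1) * β ^ 2 * δ + δ ^ 2 with hD
  have hDpos : 0 < D := by
    have : D = ((α + 1) * β ^ 2 - δ) ^ 2 + 4 * β ^ 2 * δ := by rw [hD]; ring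
    rw [this]; positivity
  set s : ℝ := Real.sqrt D with hs
  have hs0 : 0 < s := Real.sqrt_pos.mpr hDpos
  have hs2 : s ^ 2 = S ^ 2 - 4 * α * β ^ 2 * δ := by
    rw [hs, Real.sq_sqrt hDpos.le, hD, hS]; ring
  have hSpos : 0 < S := by rw [hS]; nlinarith
  have hsS : s < S := by nlinarith [mul_pos (mul_pos hα hβ2) hδ, sq_nonneg (s - S), sq_nonneg (s + S)]
  have hSs1 : 0 ≤ S + s := by linarith
  have hSs2 : 0 ≤ S - s := by linarith
  have hden : (2 * |β| * Real.sqrt α) ^ 2 = 4 * β ^ 2 * α := by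
    rw [mul_pow, mul_pow, sq_abs, Real.sq_sqrt hα.le]; ring
  have hω1sq : ω₁ ^ 2 = (S + s) / (2 * α * β ^ 2) := by
    rw [hω₁, div_pow, mul_pow, Real.sq_sqrt (by norm_num : (0:ℝ) ≤ 2),
      Real.sq_sqrt hSs1, hden]
    field_simp; ring
  have hω2sq : ω₂ ^ 2 = (S - s) / (2 * α * β ^ 2) := by
    rw [hω₂, div_pow, mul_pow, Real.sq_sqrt (by norm_num : (0:ℝ) ≤ 2),
      Real.sq_sqrt hSs2, hden]
    field_simp; ring
  have key : ∀ σ : ℝ, σ ^ 2 - S / (α * β ^ 2) * σ + δ / (α * β ^ 2)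
      = (σ - (S + s) / (2 * α * β ^ 2)) * (σ - (S - s) / (2 * α * β ^ 2)) := by
    intro σ
    field_simp
    linear_combination hs2
  have hroot1 : (ω₁ ^ 2) ^ 2 - S / (α * β ^ 2) * ω₁ ^ 2 + δ / (α * β ^ 2) = 0 := by
    rw [key, hω1sq]; ring
  have hroot2 : (ω₂ ^ 2) ^ 2 - S / (α * β ^ 2) * ω₂ ^ 2 + δ / (α * β ^ 2) = 0 := by
    rw [key, hω2sq]; ring
  refine ⟨hroot1, hroot2, ?_, ?_, ?_⟩
  · intro σ hσ
    rw [key σ] at hσ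
    rcases mul_eq_zero.mp hσ with h | h
    · left; rw [hω1sq]; linarith [sub_eq_zero.mp h]
    · right; rw [hω2sq]; linarith [sub_eq_zero.mp h]
  · have h1 : 0 ≤ ω₁ := by
      rw [hω₁]; positivity
    have hlt : ω₂ ^ 2 < ω₁ ^ 2 := by
      rw [hω1sq, hω2sq]
      rw [div_lt_div_iff₀ (by positivity) (by positivity)]
      nlinarith [mul_pos hs0 (mul_pos hα hβ2)]
    exact lt_of_pow_lt_pow_left₀ 2 h1 hlt
  · have habs : 0 < |β| := abs_pos.mpr hβ
    rw [hω₂]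
    have h2 : 0 < Real.sqrt (S - s) := Real.sqrt_pos.mpr (by linarith)
    have h3 : 0 < Real.sqrt 2 := by positivity
    have h4 : 0 < Real.sqrt α := Real.sqrt_pos.mpr hα
    positivity
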